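/- Let n ≤ 5 and let t₁, …, t_n be arbitrary positive real numbers. If the pair (Γ, t) minimizes P₂ over all rooted trees with n edges together with all assignments of the lengths t₁, …, t_n to their edges, then Γ is a simple chain: every vertex of Γ, including the root, has degree at most 2 (the root may be an interior vertex of the chain). -/

import Mathlib

/-- A rooted tree with edge set `E`, encoded by its parent-edge function:
`par e = some f` if `f` is the next edge on the simple path from `e` towards the
root, and `par e = none` if `e` is incident to the root.  Acyclicity (hence, for
a finite edge set, that we really get a tree with vertex set `E ⊕ {root}`) is
guaranteed by a rank function decreasing along `par`. -/
structure EdgeRootedTree (E : Type*) where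
  par : E → Option E
  wf : ∃ rank : E → ℕ, ∀ a b, par a = some b → rank b < rank a

namespace EdgeRootedTree

variable {E : Type*}

/-- `Γ.inUp e f` : the edge `f` lies on the simple path from `e` to the root
(`f` is an ancestor of `e`, or `f = e`). -/
def inUp (Γ : EdgeRootedTree E) (e f : E) : Prop :=
  Relation.ReflTransGen (fun a b => Γ.par a = some b) e f

open scoped Classical in
/-- `up(e)` : the set of edges of the simple path from `e` to the root, `e` included. -/
noncomputable def up (Γ : EdgeRootedTree E) [Fintype E] (e : E) : Finset E :=
  Finset.univ.filter (Γ.inUp e)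

/-- An edge is hanging if its lower endpoint is a leaf distinct from the root,
i.e. if it has no child edge. -/
def IsHanging (Γ : EdgeRootedTree E) (e : E) : Prop :=
  ∀ f, Γ.par f ≠ some e

open scoped Classical in
/-- The set `H` of hanging edges. -/
noncomputable def hanging (Γ : EdgeRootedTree E) [Fintype E] : Finset E :=
  Finset.univ.filter Γ.IsHanging

/-- The second asymptotic coefficient polynomial `P₂`, defined by
`2 P₂ = -(Σ_E t)² - Σ_E t² - Σ_H t² + 2 (Σ_H t)(Σ_E t) + Σ_{e∈E} Σ_{f∈up(e)} t_e t_f`. -/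
noncomputable def P2 [Fintype E] (Γ : EdgeRootedTree E) (t : E → ℝ) : ℝ :=
  (-(∑ e, t e) ^ 2 - ∑ e, t e ^ 2 - ∑ e ∈ Γ.hanging, t e ^ 2
      + 2 * (∑ e ∈ Γ.hanging, t e) * (∑ e, t e)
      + ∑ e, ∑ f ∈ Γ.up e, t e * t f) / 2

section Basics

variable {E : Type*} (Γ : EdgeRootedTree E)

lemma inUp_refl (a : E) : Γ.inUp a a := Relation.ReflTransGen.refl

lemma inUp_trans {a b c : E} (h1 : Γ.inUp a b) (h2 : Γ.inUp b c) : Γ.inUp a c :=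
  Relation.ReflTransGen.trans h1 h2

lemma inUp_head {a b c : E} (h : Γ.par a = some b) (h2 : Γ.inUp b c) : Γ.inUp a c :=
  Relation.ReflTransGen.head h h2

lemma rank_le_of_inUp {rank : E → ℕ} (hr : ∀ a b, Γ.par a = some b → rank b < rank a)
    {a b : E} (h : Γ.inUp a b) : rank b ≤ rank a := by
  induction h with
  | refl => exact le_refl _
  | @tail b c hab hbc ih => exact le_trans (le_of_lt (hr _ _ hbc)) ih

lemma not_inUp_of_par {a b : E} (h : Γ.par a = some b) : ¬ Γ.inUp b a := by
  obtain ⟨rank, hr⟩ := Γ.wf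
  intro hba
  exact absurd (hr a b h) (not_lt.mpr (Γ.rank_le_of_inUp hr hba))

lemma inUp_antisymm {a b : E} (h1 : Γ.inUp a b) (h2 : Γ.inUp b a) : a = b := by
  rcases Relation.ReflTransGen.cases_head h1 with h | ⟨c, hc, hcb⟩
  · exact h
  · exact absurd (Γ.inUp_trans hcb h2) (Γ.not_inUp_of_par hc)

/-- peel the first step -/
lemma inUp_of_par_of_inUp {a b c : E} (h : Γ.par a = some b) (h2 : Γ.inUp a c)
    (hac : a ≠ c) : Γ.inUp b c := by
  rcases Relation.ReflTransGen.cases_head h2 with h' | ⟨d, hd, hdc⟩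
  · exact absurd h' hac
  · rw [h] at hd; cases hd; exact hdc

lemma inUp_eq_of_par_none {a c : E} (h : Γ.par a = none) (h2 : Γ.inUp a c) : a = c := by
  rcases Relation.ReflTransGen.cases_head h2 with h' | ⟨d, hd, hdc⟩
  · exact h'
  · rw [h] at hd; cases hd

lemma inUp_total {a b c : E} (h1 : Γ.inUp a b) (h2 : Γ.inUp a c) :
    Γ.inUp b c ∨ Γ.inUp c b := by
  induction h1 using Relation.ReflTransGen.head_induction_on with
  | refl => exact Or.inl h2
  | @head x x' hstep htail ih =>
    by_cases hxc : x = c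
    · subst hxc; exact Or.inr (Relation.ReflTransGen.head hstep htail)
    · exact ih (Γ.inUp_of_par_of_inUp hstep h2 hxc)

variable [Fintype E]

lemma mem_up {a b : E} : b ∈ Γ.up a ↔ Γ.inUp a b := by
  classical
  simp [EdgeRootedTree.up]

lemma mem_hanging {a : E} : a ∈ Γ.hanging ↔ Γ.IsHanging a := by
  classical
  simp [EdgeRootedTree.hanging]

end Basics
section Move1

variable {E : Type*} (Γ : EdgeRootedTree E)

open scoped Classical in
/-- Detach the subtree rooted below `f`, making `f` a root edge. -/
noncomputable def reroot (f : E) : EdgeRootedTree E where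
  par x := if x = f then none else Γ.par x
  wf := by
    obtain ⟨rank, hr⟩ := Γ.wf
    refine ⟨rank, fun a b hab => ?_⟩
    by_cases h : a = f
    · simp [h] at hab
    · exact hr a b (by simpa [h] using hab)

lemma reroot_par_eq {f x : E} (hx : x ≠ f) : (Γ.reroot f).par x = Γ.par x := by
  simp [reroot, hx]

lemma inUp_of_reroot_inUp {f x y : E} (h : (Γ.reroot f).inUp x y) : Γ.inUp x y := by
  refine Relation.ReflTransGen.mono ?_ _ _ h
  intro a b hab
  by_cases h' : a = f
  · simp [reroot, h'] at hab
  · simpa [reroot, h'] using hab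

lemma reroot_inUp_of_not {f x y : E} (hxf : ¬ Γ.inUp x f) (h : Γ.inUp x y) :
    (Γ.reroot f).inUp x y := by
  induction h using Relation.ReflTransGen.head_induction_on with
  | refl => exact Relation.ReflTransGen.refl
  | @head u v hstep htail ih =>
    have huf : u ≠ f := fun h' => hxf (h' ▸ Relation.ReflTransGen.refl)
    have : ¬ Γ.inUp v f := fun h' => hxf (Γ.inUp_head hstep h')
    exact Relation.ReflTransGen.head (by simpa [reroot, huf] using hstep) (ih this)

lemma reroot_inUp_iff_of_not {f x y : E} (hxf : ¬ Γ.inUp x f) :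
    (Γ.reroot f).inUp x y ↔ Γ.inUp x y :=
  ⟨Γ.inUp_of_reroot_inUp, Γ.reroot_inUp_of_not hxf⟩

lemma reroot_inUp_iff_of_mem {f x y : E} (hxf : Γ.inUp x f) :
    (Γ.reroot f).inUp x y ↔ (Γ.inUp x y ∧ Γ.inUp y f) := by
  constructor
  · intro h
    refine ⟨Γ.inUp_of_reroot_inUp h, ?_⟩
    induction h using Relation.ReflTransGen.head_induction_on with
    | refl => exact hxf
    | @head u v hstep htail ih =>
      have huf : u ≠ f := by
        intro h'; subst h'; simp [reroot] at hstep
      have hpar : Γ.par u = some v := by simpa [reroot, huf] using hstep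
      exact ih (Γ.inUp_of_par_of_inUp hpar hxf huf)
  · rintro ⟨hxy, hyf⟩
    clear hxf
    induction hxy using Relation.ReflTransGen.head_induction_on with
    | refl => exact Relation.ReflTransGen.refl
    | @head u v hstep htail ih =>
      have huf : u ≠ f := by
        intro h'; subst h'
        exact Γ.not_inUp_of_par hstep (Γ.inUp_trans htail hyf)
      exact Relation.ReflTransGen.head (by simp [reroot, huf, hstep]) ih

end Move1
section Move1b

variable {E : Type*} (Γ : EdgeRootedTree E) [Fintype E]

open Finset in
lemma reroot_up_of_not {f x : E} (hxf : ¬ Γ.inUp x f) : (Γ.reroot f).up x = Γ.up x := by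
  classical
  ext y
  simp only [mem_up]
  exact Γ.reroot_inUp_iff_of_not hxf

open scoped Classical in
lemma reroot_up_of_mem {e f x : E} (hpar : Γ.par f = some e) (hxf : Γ.inUp x f) :
    (Γ.reroot f).up x = (Γ.up x) \ (Γ.up e) := by
  classical
  ext y
  simp only [mem_up, Finset.mem_sdiff]
  rw [Γ.reroot_inUp_iff_of_mem hxf]
  constructor
  · rintro ⟨hxy, hyf⟩
    exact ⟨hxy, fun hey => Γ.not_inUp_of_par hpar (Γ.inUp_trans hey hyf)⟩
  · rintro ⟨hxy, hey⟩
    refine ⟨hxy, ?_⟩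
    rcases Γ.inUp_total hxy hxf with h | h
    · exact h
    · rcases Relation.ReflTransGen.cases_head h with h' | ⟨d, hd, hdc⟩
      · subst h'; exact Relation.ReflTransGen.refl
      · rw [hpar] at hd; cases hd; exact absurd hdc hey

lemma reroot_hanging {e f g : E} (hpar : Γ.par f = some e) (hg : Γ.par g = some e)
    (hfg : g ≠ f) : (Γ.reroot f).hanging = Γ.hanging := by
  classical
  ext x
  simp only [mem_hanging, IsHanging]
  constructor
  · intro h y hy
    by_cases hyf : y = f
    · subst hyf
      rw [hpar] at hy; cases hy
      exact h g (by simp [reroot, hfg, hg])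
    · exact h y (by simpa [reroot, hyf] using hy)
  · intro h y hy
    by_cases hyf : y = f
    · subst hyf; simp [reroot] at hy
    · rw [Γ.reroot_par_eq hyf] at hy
      exact h y hy

end Move1b
section Move1c

variable {E : Type*} (Γ : EdgeRootedTree E) [Fintype E]

open Finset in
lemma P2_reroot_lt (t : E → ℝ) (ht : ∀ x, 0 < t x) {e f g : E}
    (hf : Γ.par f = some e) (hg : Γ.par g = some e) (hfg : f ≠ g) :
    P2 (Γ.reroot f) t < P2 Γ t := by
  classical
  set S : Finset E := Finset.univ.filter (fun x => Γ.inUp x f) with hS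
  set W : ℝ := ∑ y ∈ Γ.up e, t y with hW
  have key : ∑ x, ∑ y ∈ (Γ.reroot f).up x, t x * t y
      = (∑ x, ∑ y ∈ Γ.up x, t x * t y) - (∑ x ∈ S, t x) * W := by
    rw [← Finset.sum_filter_add_sum_filter_not Finset.univ (fun x => Γ.inUp x f)
      (fun x => ∑ y ∈ (Γ.reroot f).up x, t x * t y),
      ← Finset.sum_filter_add_sum_filter_not Finset.univ (fun x => Γ.inUp x f)
      (fun x => ∑ y ∈ Γ.up x, t x * t y)]
    have h2 : ∑ x ∈ Finset.univ.filter (fun x => ¬ Γ.inUp x f),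
        ∑ y ∈ (Γ.reroot f).up x, t x * t y
        = ∑ x ∈ Finset.univ.filter (fun x => ¬ Γ.inUp x f), ∑ y ∈ Γ.up x, t x * t y := by
      refine Finset.sum_congr rfl fun x hx => ?_
      rw [Γ.reroot_up_of_not (Finset.mem_filter.mp hx).2]
    have h1 : ∑ x ∈ S, ∑ y ∈ (Γ.reroot f).up x, t x * t y
        = ∑ x ∈ S, ((∑ y ∈ Γ.up x, t x * t y) - t x * W) := by
      refine Finset.sum_congr rfl fun x hx => ?_
      have hxf : Γ.inUp x f := (Finset.mem_filter.mp hx).2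
      have hsub : Γ.up e ⊆ Γ.up x := by
        intro y hy
        exact (Γ.mem_up).mpr (Γ.inUp_trans hxf
          (Γ.inUp_head hf ((Γ.mem_up).mp hy)))
      rw [Γ.reroot_up_of_mem hf hxf, Finset.sum_sdiff_eq_sub hsub, hW, Finset.mul_sum]
    rw [h2, h1, Finset.sum_sub_distrib, ← Finset.sum_mul]
    ring
  have hSpos : 0 < ∑ x ∈ S, t x :=
    Finset.sum_pos (fun i _ => ht i) ⟨f, by simp [hS, Γ.inUp_refl]⟩
  have hWpos : 0 < W :=
    Finset.sum_pos (fun i _ => ht i) ⟨e, (Γ.mem_up).mpr (Γ.inUp_refl e)⟩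
  have hmul : 0 < (∑ x ∈ S, t x) * W := mul_pos hSpos hWpos
  unfold P2
  rw [Γ.reroot_hanging hf hg hfg.symm, key]
  linarith

end Move1c
section Move2

variable {E : Type*} (Γ : EdgeRootedTree E)

open scoped Classical in
/-- Reattach the root edge `f` (and its subtree) below the hanging root edge `g`. -/
noncomputable def graft (f g : E) (hg : Γ.par g = none) (hfg : f ≠ g) : EdgeRootedTree E where
  par x := if x = f then some g else Γ.par x
  wf := by
    classical
    obtain ⟨rank, hr⟩ := Γ.wf
    refine ⟨fun x => if Γ.inUp x f then rank x + rank g + 1 else rank x, fun a b hab => ?_⟩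
    by_cases h : a = f
    · have hb : g = b := by simpa [h] using hab
      have hgf : ¬ Γ.inUp g f := fun hgf => hfg (Γ.inUp_eq_of_par_none hg hgf).symm
      rw [h, ← hb]
      simp only [hgf, if_false, Γ.inUp_refl, if_true]
      omega
    · have hpar : Γ.par a = some b := by simpa [h] using hab
      by_cases hb : Γ.inUp b f
      · have ha : Γ.inUp a f := Γ.inUp_head hpar hb
        simp only [ha, hb, if_true]
        have := hr a b hpar
        omega
      · have ha : ¬ Γ.inUp a f := fun ha => hb (Γ.inUp_of_par_of_inUp hpar ha h)
        simp only [ha, hb, if_false]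
        exact hr a b hpar

lemma graft_par_eq {f g : E} (hg : Γ.par g = none) (hfg : f ≠ g) {x : E} (hx : x ≠ f) :
    (Γ.graft f g hg hfg).par x = Γ.par x := by
  simp [graft, hx]

lemma graft_par_f {f g : E} (hg : Γ.par g = none) (hfg : f ≠ g) :
    (Γ.graft f g hg hfg).par f = some g := by
  simp [graft]

lemma inUp_graft_of_inUp {f g : E} (hg : Γ.par g = none) (hfg : f ≠ g)
    (hf : Γ.par f = none) {x y : E} (h : Γ.inUp x y) :
    (Γ.graft f g hg hfg).inUp x y := by
  refine Relation.ReflTransGen.mono (fun u v huv => ?_) _ _ h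
  have huf : u ≠ f := by rintro rfl; rw [hf] at huv; cases huv
  simpa [graft, huf] using huv

lemma graft_inUp_iff_of_not {f g : E} (hg : Γ.par g = none) (hfg : f ≠ g)
    (hf : Γ.par f = none) {x y : E} (hxf : ¬ Γ.inUp x f) :
    (Γ.graft f g hg hfg).inUp x y ↔ Γ.inUp x y := by
  constructor
  · intro h
    induction h using Relation.ReflTransGen.head_induction_on with
    | refl => exact Relation.ReflTransGen.refl
    | @head u v hstep htail ih =>
      have huf : u ≠ f := fun h' => hxf (h' ▸ Relation.ReflTransGen.refl)
      have hpar : Γ.par u = some v := by simpa [graft, huf] using hstep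
      have hvf : ¬ Γ.inUp v f := fun h' => hxf (Γ.inUp_head hpar h')
      exact Γ.inUp_head hpar (ih hvf)
  · exact Γ.inUp_graft_of_inUp hg hfg hf

lemma graft_inUp_iff_of_mem {f g : E} (hg : Γ.par g = none) (hfg : f ≠ g)
    (hf : Γ.par f = none) {x y : E} (hxf : Γ.inUp x f) :
    (Γ.graft f g hg hfg).inUp x y ↔ (Γ.inUp x y ∨ y = g) := by
  constructor
  · intro h
    induction h using Relation.ReflTransGen.head_induction_on with
    | refl => exact Or.inl Relation.ReflTransGen.refl
    | @head u v hstep htail ih =>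
      by_cases huf : u = f
      · have hv : g = v := by
          have := hstep
          rw [huf, Γ.graft_par_f hg hfg] at this
          exact Option.some.inj this
        have hvnone : (Γ.graft f g hg hfg).par v = none := by
          rw [Γ.graft_par_eq hg hfg (x := v) (by rw [← hv]; exact hfg.symm), ← hv, hg]
        exact Or.inr ((Γ.graft f g hg hfg).inUp_eq_of_par_none hvnone htail ▸ hv).symm
      · have hpar : Γ.par u = some v := by simpa [graft, huf] using hstep
        have hvf : Γ.inUp v f := Γ.inUp_of_par_of_inUp hpar hxf huf
        rcases ih hvf with h' | h'
        · exact Or.inl (Γ.inUp_head hpar h')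
        · exact Or.inr h'
  · rintro (hxy | rfl)
    · exact Γ.inUp_graft_of_inUp hg hfg hf hxy
    · exact Relation.ReflTransGen.tail
        (Γ.inUp_graft_of_inUp hg hfg hf hxf) (Γ.graft_par_f hg hfg)

end Move2
section Move2b

variable {E : Type*} (Γ : EdgeRootedTree E) [Fintype E]

lemma graft_up_of_not {f g : E} (hg : Γ.par g = none) (hfg : f ≠ g)
    (hf : Γ.par f = none) {x : E} (hxf : ¬ Γ.inUp x f) :
    (Γ.graft f g hg hfg).up x = Γ.up x := by
  classical
  ext y
  simp only [mem_up]
  exact Γ.graft_inUp_iff_of_not hg hfg hf hxf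

lemma not_inUp_g_of_inUp_f {f g : E} (hg : Γ.par g = none) (hf : Γ.par f = none)
    (hfg : f ≠ g) {x : E} (hxf : Γ.inUp x f) : ¬ Γ.inUp x g := by
  intro hxg
  rcases Γ.inUp_total hxf hxg with h | h
  · exact hfg (Γ.inUp_eq_of_par_none hf h)
  · exact hfg (Γ.inUp_eq_of_par_none hg h).symm

open scoped Classical in
lemma graft_up_of_mem {f g : E} (hg : Γ.par g = none) (hfg : f ≠ g)
    (hf : Γ.par f = none) {x : E} (hxf : Γ.inUp x f) :
    (Γ.graft f g hg hfg).up x = insert g (Γ.up x) := by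
  classical
  ext y
  simp only [mem_up, Finset.mem_insert]
  rw [Γ.graft_inUp_iff_of_mem hg hfg hf hxf]
  tauto

open scoped Classical in
lemma graft_hanging {f g : E} (hg : Γ.par g = none) (hfg : f ≠ g)
    (hf : Γ.par f = none) (hang : Γ.IsHanging g) :
    (Γ.graft f g hg hfg).hanging = Γ.hanging.erase g := by
  classical
  ext x
  simp only [mem_hanging, Finset.mem_erase, IsHanging]
  constructor
  · intro h
    have hxg : x ≠ g := by
      intro h'
      exact h f (by rw [Γ.graft_par_f hg hfg, h'])
    refine ⟨hxg, fun y hy => ?_⟩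
    by_cases hyf : y = f
    · rw [hyf, hf] at hy; cases hy
    · exact h y (by rwa [Γ.graft_par_eq hg hfg hyf])
  · rintro ⟨hxg, h⟩ y hy
    by_cases hyf : y = f
    · rw [hyf, Γ.graft_par_f hg hfg] at hy
      exact hxg (Option.some.inj hy).symm
    · rw [Γ.graft_par_eq hg hfg hyf] at hy
      exact h y hy

open Finset in
lemma P2_graft_lt (t : E → ℝ) (ht : ∀ x, 0 < t x) {f g h : E}
    (hf : Γ.par f = none) (hg : Γ.par g = none) (hh : Γ.par h = none)
    (hfg : f ≠ g) (hhf : h ≠ f) (hhg : h ≠ g) (hang : Γ.IsHanging g) :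
    P2 (Γ.graft f g hg hfg) t < P2 Γ t := by
  classical
  set A : ℝ := ∑ x, t x with hA
  set S : Finset E := Finset.univ.filter (fun x => Γ.inUp x f) with hS
  set Sf : ℝ := ∑ x ∈ S, t x with hSf
  -- the up-sum changes by + Sf * t g
  have key : ∑ x, ∑ y ∈ (Γ.graft f g hg hfg).up x, t x * t y
      = (∑ x, ∑ y ∈ Γ.up x, t x * t y) + Sf * t g := by
    rw [← Finset.sum_filter_add_sum_filter_not Finset.univ (fun x => Γ.inUp x f)
      (fun x => ∑ y ∈ (Γ.graft f g hg hfg).up x, t x * t y),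
      ← Finset.sum_filter_add_sum_filter_not Finset.univ (fun x => Γ.inUp x f)
      (fun x => ∑ y ∈ Γ.up x, t x * t y)]
    have h2 : ∑ x ∈ Finset.univ.filter (fun x => ¬ Γ.inUp x f),
        ∑ y ∈ (Γ.graft f g hg hfg).up x, t x * t y
        = ∑ x ∈ Finset.univ.filter (fun x => ¬ Γ.inUp x f), ∑ y ∈ Γ.up x, t x * t y := by
      refine Finset.sum_congr rfl fun x hx => ?_
      rw [Γ.graft_up_of_not hg hfg hf (Finset.mem_filter.mp hx).2]
    have h1 : ∑ x ∈ S, ∑ y ∈ (Γ.graft f g hg hfg).up x, t x * t y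
        = ∑ x ∈ S, ((∑ y ∈ Γ.up x, t x * t y) + t x * t g) := by
      refine Finset.sum_congr rfl fun x hx => ?_
      have hxf : Γ.inUp x f := (Finset.mem_filter.mp hx).2
      have hgnot : g ∉ Γ.up x := by
        rw [Γ.mem_up]
        exact Γ.not_inUp_g_of_inUp_f hg hf hfg hxf
      rw [Γ.graft_up_of_mem hg hfg hf hxf, Finset.sum_insert hgnot]
      ring
    rw [h2, h1, Finset.sum_add_distrib, ← Finset.sum_mul]
    ring
  have hgmem : g ∈ Γ.hanging := (Γ.mem_hanging).mpr hang
  have hhang : ∑ x ∈ (Γ.graft f g hg hfg).hanging, t x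
      = (∑ x ∈ Γ.hanging, t x) - t g := by
    rw [Γ.graft_hanging hg hfg hf hang, Finset.sum_erase_eq_sub hgmem]
  have hhang2 : ∑ x ∈ (Γ.graft f g hg hfg).hanging, t x ^ 2
      = (∑ x ∈ Γ.hanging, t x ^ 2) - t g ^ 2 := by
    rw [Γ.graft_hanging hg hfg hf hang, Finset.sum_erase_eq_sub hgmem]
  -- the size bound : Sf + t g + t h ≤ A
  have hbound : Sf + t g + t h ≤ A := by
    have hsub : insert g (insert h S) ⊆ Finset.univ := Finset.subset_univ _
    have hgS : g ∉ S := by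
      simp only [hS, Finset.mem_filter]
      rintro ⟨-, hgf⟩
      exact hfg (Γ.inUp_eq_of_par_none hg hgf).symm
    have hhS : h ∉ S := by
      simp only [hS, Finset.mem_filter]
      rintro ⟨-, hhf'⟩
      exact hhf (Γ.inUp_eq_of_par_none hh hhf')
    have : ∑ x ∈ insert g (insert h S), t x ≤ A := by
      exact Finset.sum_le_sum_of_subset_of_nonneg hsub (fun i _ _ => (ht i).le)
    rw [Finset.sum_insert (by simp [Ne.symm hhg, hgS]), Finset.sum_insert hhS] at this
    linarith
  have hSfpos : 0 < Sf :=
    Finset.sum_pos (fun i _ => ht i) ⟨f, by simp [hS, Γ.inUp_refl]⟩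
  have htg := ht g
  have hth := ht h
  have hApos : 0 < A := by
    rw [hA]
    exact Finset.sum_pos (fun i _ => ht i) ⟨f, Finset.mem_univ f⟩
  have hq : t g * (t g + Sf - 2 * A) < 0 :=
    mul_neg_of_pos_of_neg htg (by linarith)
  unfold P2
  rw [hhang, hhang2, key, ← hA]
  nlinarith [hq]

end Move2b

end EdgeRootedTree

open EdgeRootedTree in
open scoped Classical in
/-- Let `n ≤ 5` and let `t₁,…,t_n` be arbitrary positive real numbers.
If the pair `(Γ, t)` minimizes `P₂` over all rooted trees with `n` edges together with
all assignments of the lengths `t₁,…,t_n` to their edges (i.e. all `t ∘ σ` for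
permutations `σ`), then `Γ` is a simple chain: every vertex, including the root, has
degree at most `2`.  In terms of the parent-edge encoding: at most two edges are
incident to the root, and every edge has at most one child edge (the root may be an
interior vertex of the chain). -/
theorem minimal_growth_tree_with_at_most_five_edges_is_chain
    (n : ℕ) (hn : n ≤ 5) (Γ : EdgeRootedTree (Fin n)) (t : Fin n → ℝ)
    (ht : ∀ e, 0 < t e)
    (hmin : ∀ (Γ' : EdgeRootedTree (Fin n)) (σ : Equiv.Perm (Fin n)),
      P2 Γ t ≤ P2 Γ' (t ∘ σ)) :
    (Finset.univ.filter fun f => Γ.par f = none).card ≤ 2 ∧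
      ∀ e : Fin n, (Finset.univ.filter fun f => Γ.par f = some e).card ≤ 1 := by
  classical
  constructor
  · -- root has at most two incident edges
    by_contra hcon
    push_neg at hcon
    obtain ⟨x, y, z, hx, hy, hz, hxy, hxz, hyz⟩ := Finset.two_lt_card_iff.mp hcon
    rw [Finset.mem_filter] at hx hy hz
    have hxn := hx.2; have hyn := hy.2; have hzn := hz.2
    -- one of x, y, z is hanging
    have hhang : Γ.IsHanging x ∨ Γ.IsHanging y ∨ Γ.IsHanging z := by
      by_contra hno
      push_neg at hno
      obtain ⟨h1, h2, h3⟩ := hno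
      simp only [IsHanging, not_forall, not_not] at h1 h2 h3
      obtain ⟨x', hx'⟩ := h1
      obtain ⟨y', hy'⟩ := h2
      obtain ⟨z', hz'⟩ := h3
      have hne : ∀ {u v : Fin n}, Γ.par u = none → Γ.par v = some u → v ≠ x ∧ v ≠ y ∧ v ≠ z := by
        intro u v hu hv
        refine ⟨?_, ?_, ?_⟩ <;> (rintro rfl)
        · rw [hxn] at hv; cases hv
        · rw [hyn] at hv; cases hv
        · rw [hzn] at hv; cases hv
      obtain ⟨hx'x, hx'y, hx'z⟩ := hne hxn hx'
      obtain ⟨hy'x, hy'y, hy'z⟩ := hne hyn hy'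
      obtain ⟨hz'x, hz'y, hz'z⟩ := hne hzn hz'
      have hx'y' : x' ≠ y' := by
        rintro rfl; rw [hx'] at hy'; cases hy'; exact hxy rfl
      have hx'z' : x' ≠ z' := by
        rintro rfl; rw [hx'] at hz'; cases hz'; exact hxz rfl
      have hy'z' : y' ≠ z' := by
        rintro rfl; rw [hy'] at hz'; cases hz'; exact hyz rfl
      have hcard : ({x, y, z, x', y', z'} : Finset (Fin n)).card = 6 := by
        rw [Finset.card_insert_of_notMem (by simp [hxy, hxz, hx'x.symm, hy'x.symm, hz'x.symm]),
          Finset.card_insert_of_notMem (by simp [hyz, hx'y.symm, hy'y.symm, hz'y.symm]),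
          Finset.card_insert_of_notMem (by simp [hx'z.symm, hy'z.symm, hz'z.symm]),
          Finset.card_insert_of_notMem (by simp [hx'y', hx'z']),
          Finset.card_insert_of_notMem (by simp [hy'z']),
          Finset.card_singleton]
      have : ({x, y, z, x', y', z'} : Finset (Fin n)).card ≤ n := by
        refine le_trans (Finset.card_le_univ _) ?_
        simp
      omega
    have contra : ∀ (f g h : Fin n), Γ.par f = none → Γ.par g = none → Γ.par h = none →
        f ≠ g → h ≠ f → h ≠ g → Γ.IsHanging g → False := by
      intro f g h hf hg hh hfg hhf hhg hang
      have hlt := Γ.P2_graft_lt t ht hf hg hh hfg hhf hhg hang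
      have hge := hmin (Γ.graft f g hg hfg) 1
      rw [show t ∘ ⇑(1 : Equiv.Perm (Fin n)) = t from rfl] at hge
      linarith
    rcases hhang with h | h | h
    · exact contra y x z hyn hxn hzn (Ne.symm hxy) hyz.symm (Ne.symm hxz) h
    · exact contra x y z hxn hyn hzn hxy (Ne.symm hxz) (Ne.symm hyz) h
    · exact contra x z y hxn hzn hyn hxz hxy.symm hyz h
  · -- every edge has at most one child
    intro e
    by_contra hcon
    push_neg at hcon
    obtain ⟨f, hf, g, hg, hfg⟩ := Finset.one_lt_card.mp hcon
    rw [Finset.mem_filter] at hf hg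
    have hlt := Γ.P2_reroot_lt t ht hf.2 hg.2 hfg
    have hge := hmin (Γ.reroot f) 1
    rw [show t ∘ ⇑(1 : Equiv.Perm (Fin n)) = t from rfl] at hge
    linarith
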